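/- Let f(n) denote the minimum, over all 3-colorings γ : F₃ⁿ → {1,2,3}, of the ratio #{(x,y) ∈ F₃ⁿ × F₃ⁿ : x ≠ 0, y ≠ 0, x ≠ y, and γ(x) = γ(y) = γ(x+y)} / ((3ⁿ−1)·(3ⁿ−2)). Then limsup_{n→∞} f(n) ≤ 7/81; in particular this limsup is strictly smaller than 3⁻², so Schur triples are not 3-common in F₃. -/

import Mathlib

open Filter

namespace SchurAux

/-- The good 3-coloring of `F₃²`: classes `{(0,0),(0,1),(1,0)}`, `{(0,2),(1,1),(1,2)}`,
`{(2,0),(2,1),(2,2)}`. -/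
def col (u : Fin 2 → ZMod 3) : Fin 3 :=
  if u 0 = 2 then 2
  else if u 0 = 0 then (if u 1 = 2 then 1 else 0)
  else (if u 1 = 0 then 0 else 1)

lemma card_col :
    Nat.card {r : (Fin 2 → ZMod 3) × (Fin 2 → ZMod 3) //
      col r.1 = col r.2 ∧ col r.2 = col (r.1 + r.2)} = 7 := by
  rw [Nat.card_eq_fintype_card]
  decide

/-- Additive splitting of `F₃^(m+2)` as `F₃^m × F₃²`. -/
def splitE (m : ℕ) : (Fin (m + 2) → ZMod 3) ≃+ (Fin m → ZMod 3) × (Fin 2 → ZMod 3) where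
  toEquiv := ((finSumFinEquiv (m := m) (n := 2)).arrowCongr (Equiv.refl (ZMod 3))).symm.trans
      (Equiv.sumArrowEquivProdArrow _ _ _)
  map_add' := fun _ _ => rfl

/-- The coloring of `F₃^(m+2)` induced by `col` on the last two coordinates. -/
def goodColoring (m : ℕ) : (Fin (m + 2) → ZMod 3) → Fin 3 := fun x => col ((splitE m) x).2

def prodSubtypeSnd {A B : Type*} (Q : B → Prop) : {s : A × B // Q s.2} ≃ A × {b : B // Q b} where
  toFun s := (s.1.1, ⟨s.1.2, s.2⟩)
  invFun t := ⟨(t.1, t.2.1), t.2.2⟩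
  left_inv _ := rfl
  right_inv _ := rfl

lemma card_superset (m : ℕ) :
    Nat.card {p : (Fin (m + 2) → ZMod 3) × (Fin (m + 2) → ZMod 3) //
      goodColoring m p.1 = goodColoring m p.2 ∧
        goodColoring m p.2 = goodColoring m (p.1 + p.2)} = 7 * 9 ^ m := by
  classical
  have e1 := Equiv.subtypeEquiv
      (Equiv.prodCongr (splitE m).toEquiv (splitE m).toEquiv)
      (p := fun p : (Fin (m + 2) → ZMod 3) × (Fin (m + 2) → ZMod 3) =>
        goodColoring m p.1 = goodColoring m p.2 ∧
          goodColoring m p.2 = goodColoring m (p.1 + p.2))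
      (q := fun q : ((Fin m → ZMod 3) × (Fin 2 → ZMod 3)) ×
          ((Fin m → ZMod 3) × (Fin 2 → ZMod 3)) =>
        col q.1.2 = col q.2.2 ∧ col q.2.2 = col (q.1.2 + q.2.2))
      (by
        intro p
        simp only [goodColoring, Equiv.prodCongr_apply, Prod.map, AddEquiv.toEquiv_eq_coe,
          EquivLike.coe_coe, map_add, Prod.snd_add])
  have e2 := Equiv.subtypeEquiv
      (Equiv.prodProdProdComm (Fin m → ZMod 3) (Fin 2 → ZMod 3)
        (Fin m → ZMod 3) (Fin 2 → ZMod 3))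
      (p := fun q : ((Fin m → ZMod 3) × (Fin 2 → ZMod 3)) ×
          ((Fin m → ZMod 3) × (Fin 2 → ZMod 3)) =>
        col q.1.2 = col q.2.2 ∧ col q.2.2 = col (q.1.2 + q.2.2))
      (q := fun s : ((Fin m → ZMod 3) × (Fin m → ZMod 3)) ×
          ((Fin 2 → ZMod 3) × (Fin 2 → ZMod 3)) =>
        col s.2.1 = col s.2.2 ∧ col s.2.2 = col (s.2.1 + s.2.2))
      (fun _ => Iff.rfl)
  have e3 := prodSubtypeSnd (A := (Fin m → ZMod 3) × (Fin m → ZMod 3))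
      (Q := fun r : (Fin 2 → ZMod 3) × (Fin 2 → ZMod 3) =>
        col r.1 = col r.2 ∧ col r.2 = col (r.1 + r.2))
  rw [Nat.card_congr ((e1.trans e2).trans e3), Nat.card_prod, card_col, Nat.card_prod,
    Nat.card_eq_fintype_card, Fintype.card_fun]
  simp only [Fintype.card_fin, ZMod.card]
  rw [← mul_pow]
  norm_num [mul_comm]

lemma card_le (m : ℕ) :
    Nat.card {p : (Fin (m + 2) → ZMod 3) × (Fin (m + 2) → ZMod 3) //
        p.1 ≠ 0 ∧ p.2 ≠ 0 ∧ p.1 ≠ p.2 ∧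
          goodColoring m p.1 = goodColoring m p.2 ∧
            goodColoring m p.2 = goodColoring m (p.1 + p.2)} ≤ 7 * 9 ^ m := by
  rw [← card_superset m]
  exact Nat.card_le_card_of_injective
    (fun s => ⟨s.1, s.2.2.2.2⟩)
    (fun a b h => by
      apply Subtype.ext
      injection h)

end SchurAux

/-- The minimum fraction of monochromatic Schur triples over all 3-colorings of `F₃ⁿ`
has limsup at most `7/81`; in particular it is strictly smaller than `3⁻²`,
so Schur triples are not 3-common in `F₃`. -/
theorem radoMultiplicity_schur_threeColors_F3_upper :
    limsup
        (fun n : ℕ =>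
          ⨅ γ : (Fin n → ZMod 3) → Fin 3,
            (Nat.card {p : (Fin n → ZMod 3) × (Fin n → ZMod 3) //
                p.1 ≠ 0 ∧ p.2 ≠ 0 ∧ p.1 ≠ p.2 ∧
                  γ p.1 = γ p.2 ∧ γ p.2 = γ (p.1 + p.2)} : ℝ)
              / (((3 : ℝ) ^ n - 1) * ((3 : ℝ) ^ n - 2)))
        atTop ≤ 7 / 81 ∧
    limsup
        (fun n : ℕ =>
          ⨅ γ : (Fin n → ZMod 3) → Fin 3,
            (Nat.card {p : (Fin n → ZMod 3) × (Fin n → ZMod 3) //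
                p.1 ≠ 0 ∧ p.2 ≠ 0 ∧ p.1 ≠ p.2 ∧
                  γ p.1 = γ p.2 ∧ γ p.2 = γ (p.1 + p.2)} : ℝ)
              / (((3 : ℝ) ^ n - 1) * ((3 : ℝ) ^ n - 2)))
        atTop < ((3 : ℝ) ^ 2)⁻¹ := by
  set F : ℕ → ℝ := fun n : ℕ =>
    ⨅ γ : (Fin n → ZMod 3) → Fin 3,
      (Nat.card {p : (Fin n → ZMod 3) × (Fin n → ZMod 3) //
          p.1 ≠ 0 ∧ p.2 ≠ 0 ∧ p.1 ≠ p.2 ∧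
            γ p.1 = γ p.2 ∧ γ p.2 = γ (p.1 + p.2)} : ℝ)
        / (((3 : ℝ) ^ n - 1) * ((3 : ℝ) ^ n - 2)) with hFdef
  set G : ℕ → ℝ := fun n : ℕ =>
    7 * 9 ^ n / (81 * (((3 : ℝ) ^ n - 1) * ((3 : ℝ) ^ n - 2))) with hGdef
  have hdenom : ∀ n : ℕ, 0 ≤ ((3 : ℝ) ^ n - 1) * ((3 : ℝ) ^ n - 2) := by
    intro n
    rcases n with _ | n
    · norm_num
    · have h1 : (1 : ℝ) ≤ 3 ^ n := one_le_pow₀ (by norm_num)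
      have h3 : (3 : ℝ) ^ (n + 1) = 3 * 3 ^ n := by ring
      nlinarith
  have hF0 : ∀ n, 0 ≤ F n := by
    intro n
    exact Real.iInf_nonneg fun γ => div_nonneg (Nat.cast_nonneg _) (hdenom n)
  have hFG : ∀ᶠ n in atTop, F n ≤ G n := by
    filter_upwards [eventually_ge_atTop 2] with n hn
    obtain ⟨m, rfl⟩ : ∃ m, n = m + 2 := ⟨n - 2, by omega⟩
    have hD : 0 < ((3 : ℝ) ^ (m + 2) - 1) * ((3 : ℝ) ^ (m + 2) - 2) := by
      have h1 : (1 : ℝ) ≤ 3 ^ m := one_le_pow₀ (by norm_num)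
      have h3 : (3 : ℝ) ^ (m + 2) = 9 * 3 ^ m := by ring
      nlinarith
    have hbdd : BddBelow (Set.range fun γ : (Fin (m + 2) → ZMod 3) → Fin 3 =>
        (Nat.card {p : (Fin (m + 2) → ZMod 3) × (Fin (m + 2) → ZMod 3) //
            p.1 ≠ 0 ∧ p.2 ≠ 0 ∧ p.1 ≠ p.2 ∧
              γ p.1 = γ p.2 ∧ γ p.2 = γ (p.1 + p.2)} : ℝ)
          / (((3 : ℝ) ^ (m + 2) - 1) * ((3 : ℝ) ^ (m + 2) - 2))) := by
      refine ⟨0, ?_⟩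
      rintro x ⟨γ, rfl⟩
      exact div_nonneg (Nat.cast_nonneg _) hD.le
    have hle := ciInf_le hbdd (SchurAux.goodColoring m)
    refine le_trans hle ?_
    have hc : (Nat.card {p : (Fin (m + 2) → ZMod 3) × (Fin (m + 2) → ZMod 3) //
        p.1 ≠ 0 ∧ p.2 ≠ 0 ∧ p.1 ≠ p.2 ∧
          SchurAux.goodColoring m p.1 = SchurAux.goodColoring m p.2 ∧
            SchurAux.goodColoring m p.2 = SchurAux.goodColoring m (p.1 + p.2)} : ℝ)
        ≤ 7 * 9 ^ m := by
      exact_mod_cast SchurAux.card_le m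
    have hGeq : G (m + 2) =
        (7 * 9 ^ m : ℝ) / (((3 : ℝ) ^ (m + 2) - 1) * ((3 : ℝ) ^ (m + 2) - 2)) := by
      simp only [hGdef]
      rw [show (9 : ℝ) ^ (m + 2) = 81 * 9 ^ m by ring]
      field_simp
    rw [hGeq]
    gcongr
  have h0 : Tendsto (fun n : ℕ => ((1 : ℝ) / 3) ^ n) atTop (nhds 0) :=
    tendsto_pow_atTop_nhds_zero_of_lt_one (by norm_num) (by norm_num)
  have hG : Tendsto G atTop (nhds (7 / 81)) := by
    have hGeq : G = fun n : ℕ =>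
        7 / (81 * ((1 - (1 / 3 : ℝ) ^ n) * (1 - 2 * (1 / 3 : ℝ) ^ n))) := by
      funext n
      simp only [hGdef]
      have h9 : (9 : ℝ) ^ n = 3 ^ n * 3 ^ n := by rw [← mul_pow]; norm_num
      have h3 : ((3 : ℝ) ^ n) ≠ 0 := pow_ne_zero _ (by norm_num)
      rw [h9]
      field_simp
      rw [one_div_pow,
        show (1 : ℝ) - 1 / 3 ^ n = (3 ^ n - 1) / 3 ^ n by field_simp,
        show (1 : ℝ) - 2 * (1 / 3 ^ n) = (3 ^ n - 2) / 3 ^ n by field_simp,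
        div_mul_div_comm, one_div_div, sq]
    rw [hGeq]
    have hx : Tendsto (fun n : ℕ =>
        (81 : ℝ) * ((1 - (1 / 3 : ℝ) ^ n) * (1 - 2 * (1 / 3 : ℝ) ^ n)))
        atTop (nhds (81 * ((1 - 0) * (1 - 2 * 0)))) :=
      tendsto_const_nhds.mul ((tendsto_const_nhds.sub h0).mul
        (tendsto_const_nhds.sub (h0.const_mul 2)))
    have hfinal := Tendsto.div
      (tendsto_const_nhds : Tendsto (fun _ : ℕ => (7 : ℝ)) atTop (nhds 7)) hx (by norm_num)
    simpa [Pi.div_def] using hfinal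
  have h1 : limsup F atTop ≤ 7 / 81 := by
    have := limsup_le_limsup hFG
      (isCoboundedUnder_le_of_le atTop hF0)
      hG.isBoundedUnder_le
    rwa [hG.limsup_eq] at this
  exact ⟨h1, lt_of_le_of_lt h1 (by norm_num)⟩
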